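/- Suppose a ≠ 0 and f = 0, and let X = X(a,b,c,d,e,0). Then rank X = 4, X³ = 0, and rank X² = 1 if 4ae − 4bd + 3c² = 0 while rank X² = 2 otherwise. -/

import Mathlib

/-- The image of the general nilpotent element
`a·e_{α₁} + b·e_{α₁+α₂} + c·e_{2α₁+α₂} + d·e_{3α₁+α₂} + e·e_{3α₁+2α₂} + f·e_{α₂}`
of the Lie algebra `g₂` over `F` in its faithful 7-dimensional representation. -/
noncomputable def g2X {F : Type*} [Field F] (a b c d e f : F) :
    Matrix (Fin 7) (Fin 7) F :=
  !![0, a, b, 2*c, d, e, 0;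
     0, 0, f, -2*b, -c, 0, e;
     0, 0, 0, 2*a, 0, -c, -d;
     0, 0, 0, 0, a, b, c;
     0, 0, 0, 0, 0, f, -b;
     0, 0, 0, 0, 0, 0, a;
     0, 0, 0, 0, 0, 0, 0]

namespace G2Aux

open Matrix

@[simp] lemma cons_val_five' {α : Type*} {m : ℕ} (x : α) (u : Fin (m+5) → α) :
    Matrix.vecCons x u 5 = vecHead (vecTail (vecTail (vecTail (vecTail u)))) := rfl

@[simp] lemma cons_val_six' {α : Type*} {m : ℕ} (x : α) (u : Fin (m+6) → α) :
    Matrix.vecCons x u 6 = vecHead (vecTail (vecTail (vecTail (vecTail (vecTail u))))) := rfl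

variable {F : Type*} [Field F] (a b c d e : F)

/-- The square of `g2X a b c d e 0`, explicitly. -/
noncomputable def Y : Matrix (Fin 7) (Fin 7) F :=
  !![0,0,0,0,a*c,b*c,2*c^2-2*b*d+2*a*e;
     0,0,0,0,-(2*a*b),-(2*b^2),-(b*c);
     0,0,0,0,2*a^2,2*a*b,a*c;
     0,0,0,0,0,0,0;
     0,0,0,0,0,0,0;
     0,0,0,0,0,0,0;
     0,0,0,0,0,0,0]

set_option maxHeartbeats 1000000 in
lemma sq_eq : (g2X a b c d e 0) ^ 2 = Y a b c d e := by
  rw [pow_two, g2X, Y]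
  ext i j
  fin_cases i <;> fin_cases j <;>
    (simp [Matrix.mul_apply, Fin.sum_univ_seven]
     try simp [Matrix.vecHead, Matrix.vecTail]
     try ring)

set_option maxHeartbeats 1000000 in
lemma cube_eq : (g2X a b c d e 0) ^ 3 = 0 := by
  rw [pow_succ, sq_eq, Y, g2X]
  ext i j
  fin_cases i <;> fin_cases j <;>
    (simp [Matrix.mul_apply, Fin.sum_univ_seven]
     try simp [Matrix.vecHead, Matrix.vecTail]
     try ring)

set_option maxHeartbeats 1000000 in
lemma X_factor (ha : a ≠ 0) :
    g2X a b c d e 0 =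
      (!![1, 0, 0, 0;
          0, -(b/a), -(c/a), (a*e - b*d + c^2)/a^2;
          0, 1, 0, 0;
          0, 0, 1, 0;
          0, 0, 0, -(b/a);
          0, 0, 0, 1;
          0, 0, 0, 0] : Matrix (Fin 7) (Fin 4) F) *
      (!![0, a, b, 2*c, d, e, 0;
          0, 0, 0, 2*a, 0, -c, -d;
          0, 0, 0, 0, a, b, c;
          0, 0, 0, 0, 0, 0, a] : Matrix (Fin 4) (Fin 7) F) := by
  rw [g2X]
  ext i j
  fin_cases i <;> fin_cases j <;>
    (simp [Matrix.mul_apply, Fin.sum_univ_four]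
     try simp [Matrix.vecHead, Matrix.vecTail]
     try field_simp
     try ring)

set_option maxHeartbeats 1000000 in
lemma X_select :
    (!![1,0,0,0,0,0,0;
        0,0,1,0,0,0,0;
        0,0,0,1,0,0,0;
        0,0,0,0,0,1,0] : Matrix (Fin 4) (Fin 7) F) *
      (g2X a b c d e 0 *
        (!![0,0,0,0;
            1,0,0,0;
            0,0,0,0;
            0,1,0,0;
            0,0,1,0;
            0,0,0,0;
            0,0,0,1] : Matrix (Fin 7) (Fin 4) F)) =
    !![a, 2*c, d, 0;
       0, 2*a, 0, -d;
       0, 0, a, c;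
       0, 0, 0, a] := by
  rw [g2X]
  ext i j
  fin_cases i <;> fin_cases j <;>
    (simp [Matrix.mul_apply, Fin.sum_univ_seven, Fin.sum_univ_four]
     try simp [Matrix.vecHead, Matrix.vecTail]
     try ring)

set_option maxHeartbeats 1000000 in
lemma Y_factor2 (ha : a ≠ 0) (h2 : (2:F) ≠ 0) :
    Y a b c d e =
      (!![c/(2*a), (4*a*e-4*b*d+3*c^2)/2;
          -(b/a), 0;
          1, 0;
          0, 0;
          0, 0;
          0, 0;
          0, 0] : Matrix (Fin 7) (Fin 2) F) *
      (!![0,0,0,0,2*a^2,2*a*b,a*c;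
          0,0,0,0,0,0,1] : Matrix (Fin 2) (Fin 7) F) := by
  rw [Y]
  ext i j
  fin_cases i <;> fin_cases j <;>
    (simp [Matrix.mul_apply, Fin.sum_univ_two]
     try simp [Matrix.vecHead, Matrix.vecTail]
     try field_simp
     try ring)

set_option maxHeartbeats 1000000 in
lemma Y_factor1 (ha : a ≠ 0) (h2 : (2:F) ≠ 0)
    (hk : 4 * a * e - 4 * b * d + 3 * c ^ 2 = 0) :
    Y a b c d e =
      (!![c/(2*a); -(b/a); 1; 0; 0; 0; 0] : Matrix (Fin 7) (Fin 1) F) *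
      (!![0,0,0,0,2*a^2,2*a*b,a*c] : Matrix (Fin 1) (Fin 7) F) := by
  rw [Y]
  ext i j
  fin_cases i <;> fin_cases j <;>
    (simp [Matrix.mul_apply, Fin.sum_univ_one]
     try simp [Matrix.vecHead, Matrix.vecTail]
     try field_simp
     try linear_combination a * hk
     try linear_combination hk
     try ring)

set_option maxHeartbeats 1000000 in
lemma Y_select2 :
    (!![1,0,0,0,0,0,0;
        0,0,1,0,0,0,0] : Matrix (Fin 2) (Fin 7) F) *
      (Y a b c d e *
        (!![0,0; 0,0; 0,0; 0,0; 0,1; 0,0; 1,0] : Matrix (Fin 7) (Fin 2) F)) =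
    !![2*c^2-2*b*d+2*a*e, a*c;
       a*c, 2*a^2] := by
  rw [Y]
  ext i j
  fin_cases i <;> fin_cases j <;>
    (simp [Matrix.mul_apply, Fin.sum_univ_seven, Fin.sum_univ_two]
     try simp [Matrix.vecHead, Matrix.vecTail]
     try ring)

set_option maxHeartbeats 1000000 in
lemma Y_select1 :
    (!![0,0,1,0,0,0,0] : Matrix (Fin 1) (Fin 7) F) *
      (Y a b c d e *
        (!![0; 0; 0; 0; 1; 0; 0] : Matrix (Fin 7) (Fin 1) F)) =
    !![2*a^2] := by
  rw [Y]
  ext i j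
  fin_cases i <;> fin_cases j <;>
    (simp [Matrix.mul_apply, Fin.sum_univ_seven, Fin.sum_univ_one]
     try simp [Matrix.vecHead, Matrix.vecTail]
     try ring)

end G2Aux

/-- Let `a ≠ 0` and `f = 0`, `X = X(a,b,c,d,e,0)`. Then `rank X = 4`, `X³ = 0`,
and `rank X² = 1` when `4ae − 4bd + 3c² = 0`, while `rank X² = 2` otherwise. -/
theorem g2_case3 (F : Type*) [Field F] [Fintype F] (hchar : 3 < ringChar F)
    (a b c d e : F) (ha : a ≠ 0) :
    (g2X a b c d e 0).rank = 4 ∧ (g2X a b c d e 0) ^ 3 = 0 ∧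
    (4 * a * e - 4 * b * d + 3 * c ^ 2 = 0 → ((g2X a b c d e 0) ^ 2).rank = 1) ∧
    (4 * a * e - 4 * b * d + 3 * c ^ 2 ≠ 0 → ((g2X a b c d e 0) ^ 2).rank = 2) := by
  have h2 : (2:F) ≠ 0 := by
    intro h
    have hd : ringChar F ∣ 2 := (ringChar.spec F 2).mp (by exact_mod_cast h)
    have := Nat.le_of_dvd (by norm_num) hd
    omega
  refine ⟨?_, G2Aux.cube_eq a b c d e, ?_, ?_⟩
  · -- rank X = 4
    have hle : (g2X a b c d e 0).rank ≤ 4 := by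
      rw [G2Aux.X_factor a b c d e ha]
      exact le_trans (Matrix.rank_mul_le_left _ _)
        (le_trans (Matrix.rank_le_card_width _) (by simp))
    have hsel := G2Aux.X_select a b c d e
    have hunit : IsUnit (!![a, 2*c, d, 0;
        0, 2*a, 0, -d;
        0, 0, a, c;
        0, 0, 0, a] : Matrix (Fin 4) (Fin 4) F) := by
      rw [Matrix.isUnit_iff_isUnit_det]
      refine isUnit_iff_ne_zero.mpr ?_
      have hdet : (!![a, 2*c, d, 0;
          0, 2*a, 0, -d;
          0, 0, a, c;
          0, 0, 0, a] : Matrix (Fin 4) (Fin 4) F).det = 2 * a^4 := by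
        simp [Matrix.det_succ_row_zero, Fin.sum_univ_succ]
        ring
      rw [hdet]
      exact mul_ne_zero h2 (pow_ne_zero 4 ha)
    have hrank4 := Matrix.rank_of_isUnit _ hunit
    rw [← hsel] at hrank4
    have t1 := Matrix.rank_mul_le_right
      (!![1,0,0,0,0,0,0;
          0,0,1,0,0,0,0;
          0,0,0,1,0,0,0;
          0,0,0,0,0,1,0] : Matrix (Fin 4) (Fin 7) F)
      (g2X a b c d e 0 *
          (!![0,0,0,0;
              1,0,0,0;
              0,0,0,0;
              0,1,0,0;
              0,0,1,0;
              0,0,0,0;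
              0,0,0,1] : Matrix (Fin 7) (Fin 4) F))
    have t2 := Matrix.rank_mul_le_left (g2X a b c d e 0)
          (!![0,0,0,0;
              1,0,0,0;
              0,0,0,0;
              0,1,0,0;
              0,0,1,0;
              0,0,0,0;
              0,0,0,1] : Matrix (Fin 7) (Fin 4) F)
    rw [hrank4] at t1
    simp only [Fintype.card_fin] at t1
    omega
  · -- k = 0 → rank X² = 1
    intro hk
    rw [G2Aux.sq_eq a b c d e]
    have hle : (G2Aux.Y a b c d e).rank ≤ 1 := by
      rw [G2Aux.Y_factor1 a b c d e ha h2 hk]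
      exact le_trans (Matrix.rank_mul_le_left _ _)
        (le_trans (Matrix.rank_le_card_width _) (by simp))
    have hsel := G2Aux.Y_select1 a b c d e
    have hunit : IsUnit (!![2*a^2] : Matrix (Fin 1) (Fin 1) F) := by
      rw [Matrix.isUnit_iff_isUnit_det]
      refine isUnit_iff_ne_zero.mpr ?_
      have hdet : (!![2*a^2] : Matrix (Fin 1) (Fin 1) F).det = 2*a^2 :=
        Matrix.det_fin_one _
      rw [hdet]
      exact mul_ne_zero h2 (pow_ne_zero 2 ha)
    have hrank1 := Matrix.rank_of_isUnit _ hunit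
    rw [← hsel] at hrank1
    have t1 := Matrix.rank_mul_le_right
      (!![0,0,1,0,0,0,0] : Matrix (Fin 1) (Fin 7) F)
      (G2Aux.Y a b c d e *
        (!![0; 0; 0; 0; 1; 0; 0] : Matrix (Fin 7) (Fin 1) F))
    have t2 := Matrix.rank_mul_le_left (G2Aux.Y a b c d e)
        (!![0; 0; 0; 0; 1; 0; 0] : Matrix (Fin 7) (Fin 1) F)
    rw [hrank1] at t1
    simp only [Fintype.card_fin] at t1
    omega
  · -- k ≠ 0 → rank X² = 2
    intro hk
    rw [G2Aux.sq_eq a b c d e]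
    have hle : (G2Aux.Y a b c d e).rank ≤ 2 := by
      rw [G2Aux.Y_factor2 a b c d e ha h2]
      exact le_trans (Matrix.rank_mul_le_left _ _)
        (le_trans (Matrix.rank_le_card_width _) (by simp))
    have hsel := G2Aux.Y_select2 a b c d e
    have hunit : IsUnit (!![2*c^2-2*b*d+2*a*e, a*c;
        a*c, 2*a^2] : Matrix (Fin 2) (Fin 2) F) := by
      rw [Matrix.isUnit_iff_isUnit_det]
      refine isUnit_iff_ne_zero.mpr ?_
      have hdet : (!![2*c^2-2*b*d+2*a*e, a*c;
          a*c, 2*a^2] : Matrix (Fin 2) (Fin 2) F).det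
          = a^2 * (4 * a * e - 4 * b * d + 3 * c ^ 2) := by
        simp [Matrix.det_fin_two]
        ring
      rw [hdet]
      exact mul_ne_zero (pow_ne_zero 2 ha) hk
    have hrank2 := Matrix.rank_of_isUnit _ hunit
    rw [← hsel] at hrank2
    have t1 := Matrix.rank_mul_le_right
      (!![1,0,0,0,0,0,0;
          0,0,1,0,0,0,0] : Matrix (Fin 2) (Fin 7) F)
      (G2Aux.Y a b c d e *
        (!![0,0; 0,0; 0,0; 0,0; 0,1; 0,0; 1,0] : Matrix (Fin 7) (Fin 2) F))
    have t2 := Matrix.rank_mul_le_left (G2Aux.Y a b c d e)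
        (!![0,0; 0,0; 0,0; 0,0; 0,1; 0,0; 1,0] : Matrix (Fin 7) (Fin 2) F)
    rw [hrank2] at t1
    simp only [Fintype.card_fin] at t1
    omega
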